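/- There exists an entrywise nonnegative n×3 matrix L_n such that A_n = L_n R L_nᵀ, where R is the 3×3 matrix with rows (0,1,1), (1,-6,1), (1,1,0). Specifically, L_n consists of the last three columns of (I_n - J_n)^{-3}, where J_n is the n×n nilpotent Jordan block. -/

import Mathlib

open Matrix

theorem stmt_5 (n : ℕ) (hn : 3 ≤ n)
    (A : Matrix (Fin n) (Fin n) ℝ)
    (hA : ∀ i j : Fin n, A i j = ((j.val : ℝ) - (i.val : ℝ)) ^ 2)
    (J : Matrix (Fin n) (Fin n) ℝ)
    (hJ : ∀ i j : Fin n, J i j = if i.val + 1 = j.val then 1 else 0)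
    (R : Matrix (Fin 3) (Fin 3) ℝ)
    (hR : R = !![0, 1, 1; 1, -6, 1; 1, 1, 0]) :
    ∃ L : Matrix (Fin n) (Fin 3) ℝ,
      (∀ (i : Fin n) (k : Fin 3),
        L i k = ((1 - J)⁻¹ ^ 3) i ⟨n - 3 + k.val, by have := k.isLt; omega⟩) ∧
      (∀ (i : Fin n) (k : Fin 3), 0 ≤ L i k) ∧
      A = L * R * Lᵀ := by
  classical
  have hJmul : ∀ B : Matrix (Fin n) (Fin n) ℝ, ∀ i j : Fin n,
      (J * B) i j = if h : i.val + 1 < n then B ⟨i.val + 1, h⟩ j else 0 := by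
    intro B i j
    rw [Matrix.mul_apply]
    by_cases h : i.val + 1 < n
    · rw [dif_pos h, Finset.sum_eq_single (⟨i.val + 1, h⟩ : Fin n)]
      · rw [hJ]; simp
      · intro k _ hk
        rw [hJ]
        have hne : ¬ (i.val + 1 = k.val) := fun hc => hk (Fin.ext hc.symm)
        simp [hne]
      · simp
    · rw [dif_neg h]
      apply Finset.sum_eq_zero
      intro k _
      rw [hJ]
      have hne : ¬ (i.val + 1 = k.val) := by have := k.isLt; omega
      simp [hne]
  set M : Matrix (Fin n) (Fin n) ℝ :=
    Matrix.of fun i j => if i.val ≤ j.val then (1 : ℝ) else 0 with hMdef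
  set N1 : Matrix (Fin n) (Fin n) ℝ :=
    Matrix.of fun i j => if i.val ≤ j.val then (j.val : ℝ) - i.val + 1 else 0 with hN1def
  set N : Matrix (Fin n) (Fin n) ℝ :=
    Matrix.of fun i j => if i.val ≤ j.val then
      ((j.val : ℝ) - i.val + 1) * ((j.val : ℝ) - i.val + 2) / 2 else 0 with hNdef
  have h1 : (1 - J) * N = N1 := by
    ext i j
    rw [Matrix.sub_mul, Matrix.one_mul, Matrix.sub_apply, hJmul, hN1def, hNdef]
    simp only [Matrix.of_apply]
    by_cases h : i.val + 1 < n
    · rw [dif_pos h]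
      split_ifs with ha hb hb
      · have hle : ((i.val : ℝ) + 1) ≤ (j.val : ℝ) := by exact_mod_cast hb
        push_cast
        ring
      · have hij : (j.val : ℝ) = i.val := by exact_mod_cast (by omega : j.val = i.val)
        rw [hij]; ring
      · exact absurd hb (by omega)
      · ring
    · rw [dif_neg h]
      split_ifs with ha
      · have hij : (j.val : ℝ) = i.val := by
          exact_mod_cast (by have := j.isLt; omega : j.val = i.val)
        rw [hij]; ring
      · ring
  have h2 : (1 - J) * N1 = M := by
    ext i j
    rw [Matrix.sub_mul, Matrix.one_mul, Matrix.sub_apply, hJmul, hMdef, hN1def]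
    simp only [Matrix.of_apply]
    by_cases h : i.val + 1 < n
    · rw [dif_pos h]
      split_ifs with ha hb hb
      · push_cast; ring
      · have hij : (j.val : ℝ) = i.val := by exact_mod_cast (by omega : j.val = i.val)
        rw [hij]; ring
      · exact absurd hb (by omega)
      · ring
    · rw [dif_neg h]
      split_ifs with ha
      · have hij : (j.val : ℝ) = i.val := by
          exact_mod_cast (by have := j.isLt; omega : j.val = i.val)
        rw [hij]; ring
      · ring
  have h3 : (1 - J) * M = 1 := by
    ext i j
    rw [Matrix.sub_mul, Matrix.one_mul, Matrix.sub_apply, hJmul, hMdef, Matrix.one_apply]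
    simp only [Matrix.of_apply]
    by_cases hij : i = j
    · subst hij
      rw [if_pos rfl, if_pos (le_refl i.val)]
      by_cases h : i.val + 1 < n
      · rw [dif_pos h, if_neg (by omega : ¬ (i.val + 1 ≤ i.val))]; ring
      · rw [dif_neg h]; ring
    · rw [if_neg hij]
      have hvne : i.val ≠ j.val := fun hv => hij (Fin.ext hv)
      by_cases h : i.val + 1 < n
      · rw [dif_pos h]
        split_ifs with ha hb hb
        · ring
        · exact absurd (by omega : i.val = j.val) hvne
        · exact absurd hb (by omega)
        · ring
      · rw [dif_neg h]
        split_ifs with ha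
        · exact absurd (by have := j.isLt; omega : i.val = j.val) hvne
        · ring
  have hM1' : M * (1 - J) = 1 := mul_eq_one_comm.mp h3
  have hinv : (1 - J)⁻¹ = M := Matrix.inv_eq_right_inv h3
  have hcube : (1 - J) ^ 3 * N = 1 := by
    have e : (1 - J) ^ 3 * N = (1 - J) * ((1 - J) * ((1 - J) * N)) := by
      rw [pow_succ, pow_succ, pow_one, mul_assoc, mul_assoc]
    rw [e, h1, h2, h3]
  have hc : Commute M (1 - J) := by
    unfold Commute SemiconjBy
    rw [hM1', h3]
  have hMcube : M ^ 3 * (1 - J) ^ 3 = 1 := by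
    rw [← hc.mul_pow 3, hM1', one_pow]
  have hN : M ^ 3 = N := by
    calc M ^ 3 = M ^ 3 * ((1 - J) ^ 3 * N) := by rw [hcube, mul_one]
      _ = (M ^ 3 * (1 - J) ^ 3) * N := by rw [mul_assoc]
      _ = N := by rw [hMcube, one_mul]
  have key : (1 - J)⁻¹ ^ 3 = N := by rw [hinv, hN]
  have hcast : ((n - 3 : ℕ) : ℝ) = (n : ℝ) - 3 := by
    rw [Nat.cast_sub hn]; norm_num
  have Lpoly : ∀ (i : Fin n) (k : Fin 3),
      ((1 - J)⁻¹ ^ 3) i ⟨n - 3 + k.val, by have := k.isLt; omega⟩ =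
        ((n : ℝ) - 3 + k.val - i.val + 1) * ((n : ℝ) - 3 + k.val - i.val + 2) / 2 := by
    intro i k
    rw [key, hNdef]
    simp only [Matrix.of_apply]
    have hcast2 : ((n - 3 + k.val : ℕ) : ℝ) = (n : ℝ) - 3 + k.val := by
      push_cast [hcast]; ring
    split_ifs with h
    · rw [hcast2]
    · have hik : i.val = n - 3 + k.val + 1 ∨ i.val = n - 3 + k.val + 2 := by
        have := i.isLt; have := k.isLt
        omega
      rcases hik with he | he
      · have hre : (i.val : ℝ) = (n : ℝ) - 3 + k.val + 1 := by
          rw [show (i.val : ℝ) = ((n - 3 + k.val + 1 : ℕ) : ℝ) from by exact_mod_cast congrArg Nat.cast he]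
          push_cast [hcast]; ring
        rw [hre]; ring
      · have hre : (i.val : ℝ) = (n : ℝ) - 3 + k.val + 2 := by
          rw [show (i.val : ℝ) = ((n - 3 + k.val + 2 : ℕ) : ℝ) from by exact_mod_cast congrArg Nat.cast he]
          push_cast [hcast]; ring
        rw [hre]; ring
  refine ⟨Matrix.of fun i k => ((1 - J)⁻¹ ^ 3) i ⟨n - 3 + k.val, by have := k.isLt; omega⟩,
    fun i k => rfl, ?_, ?_⟩
  · intro i k
    show (0:ℝ) ≤ ((1 - J)⁻¹ ^ 3) i ⟨n - 3 + k.val, by have := k.isLt; omega⟩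
    rw [key, hNdef]
    simp only [Matrix.of_apply]
    split_ifs with h
    · have hd : (i.val : ℝ) ≤ ((n - 3 + k.val : ℕ) : ℝ) := by
        exact_mod_cast (by simpa using h : i.val ≤ n - 3 + k.val)
      nlinarith
    · exact le_refl 0
  · ext i j
    rw [hA]
    simp only [Matrix.mul_apply, Matrix.transpose_apply, Fin.sum_univ_three, hR, Matrix.of_apply]
    rw [Lpoly i 0, Lpoly i 1, Lpoly i 2, Lpoly j 0, Lpoly j 1, Lpoly j 2]
    norm_num [Matrix.cons_val_zero, Matrix.cons_val_one, Matrix.head_cons,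
      Matrix.cons_val_two, Matrix.tail_cons, Matrix.vecHead, Matrix.vecTail,
      Fin.val_zero, Fin.val_one]
    ring
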